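/- Let Ω ⊆ Z^d be finite and let U ⊆ Ω be a union of boxes C_1, ..., C_m each contained in Ω. Then the Minkowski difference Ω - U equals the union over i of (Ω - corners(C_i)). -/

import Mathlib

open Pointwise

/-- A box in `ℤ^d`: the Cartesian product of integer intervals `[a i, b i]`. -/
def box {d : ℕ} (a b : Fin d → ℤ) : Set (Fin d → ℤ) :=
  {x | ∀ i, a i ≤ x i ∧ x i ≤ b i}

/-- The set of corners of the box with min point `a` and max point `b`. -/
def corners {d : ℕ} (a b : Fin d → ℤ) : Set (Fin d → ℤ) :=
  {x | ∀ i, x i = a i ∨ x i = b i}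

/-- If `U ⊆ Ω` is a union of boxes `C_1, …, C_m`, each contained in the box `Ω`, then
the Minkowski difference `Ω - U` equals the union over `i` of `Ω - corners(C_i)`. -/
theorem minkowski_diff_union_boxes {d m : ℕ} (omin omax : Fin d → ℤ)
    (a b : Fin m → Fin d → ℤ)
    (hab : ∀ i t, a i t ≤ b i t)
    (hsub : ∀ i, box (a i) (b i) ⊆ box omin omax) :
    box omin omax - (⋃ i, box (a i) (b i))
      = ⋃ i, (box omin omax - corners (a i) (b i)) := by
  ext x
  simp only [Set.mem_sub, Set.mem_iUnion]
  constructor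
  · rintro ⟨w, hw, u, hu, rfl⟩
    obtain ⟨i, hui⟩ := hu
    refine ⟨i, fun t => w t - u t + (if 0 ≤ w t - u t then a i t else b i t), ?_,
      fun t => if 0 ≤ w t - u t then a i t else b i t, fun t => ?_, ?_⟩
    · intro t
      have h1 : omin t ≤ a i t := (hsub i (fun s => ⟨le_refl _, hab i s⟩) t).1
      have h2 : b i t ≤ omax t := ((hsub i (fun s => ⟨hab i s, le_refl _⟩)) t).2
      have hu1 := (hui t).1
      have hu2 := (hui t).2
      have hw1 := (hw t).1
      have hw2 := (hw t).2
      by_cases h : 0 ≤ w t - u t <;> simp [h] <;> constructor <;> omega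
    · by_cases h : 0 ≤ w t - u t <;> simp only [h, ↓reduceIte, true_or, or_true]
    · funext t; by_cases h : 0 ≤ w t - u t <;> simp [h]
  · rintro ⟨i, w, hw, c, hc, rfl⟩
    refine ⟨w, hw, c, ⟨i, fun t => ?_⟩, rfl⟩
    rcases hc t with h | h <;> rw [h]
    · exact ⟨le_refl _, hab i t⟩
    · exact ⟨hab i t, le_refl _⟩
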